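/- Let G₁ and G₂ be groups and let f : G₁ → G₂ be a map satisfying f(a²ba⁻¹) = f(a)²·f(b)·f(a)⁻¹ for all a,b ∈ G₁. Then f(aba⁻¹) = f(a)·f(ba)·f(a)⁻² for all a,b ∈ G₁. -/
import Mathlib


/-- A map preserving the gyrogroup operation `a ⊙ b = a² b a⁻¹` satisfies
`f (a b a⁻¹) = f a · f (b a) · (f a)⁻²`. -/
theorem gyro_hom_eq_3 (G₁ G₂ : Type*) [Group G₁] [Group G₂] (f : G₁ → G₂)
    (hf : ∀ a b : G₁, f (a ^ 2 * b * a⁻¹) = (f a) ^ 2 * f b * (f a)⁻¹) :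
    ∀ a b : G₁, f (a * b * a⁻¹) = f a * f (b * a) * ((f a) ^ 2)⁻¹ := by
  have h1 : f 1 = 1 := by
    have h := hf 1 1
    simp only [one_pow, mul_one, inv_one, mul_inv_cancel_right] at h
    have h2 : f 1 * f 1 = f 1 * 1 := by rw [mul_one, ← sq]; exact h.symm
    exact mul_left_cancel h2
  have hinv : ∀ x : G₁, f x⁻¹ = (f x)⁻¹ := by
    intro x
    have h := hf x x⁻¹
    have hx : x ^ 2 * x⁻¹ * x⁻¹ = 1 := by group
    rw [hx, h1] at h
    have : f x⁻¹ = (f x ^ 2)⁻¹ * 1 * f x := by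
      rw [h]; group
    rw [this]; group
  intro a b
  have key := hf a (b * a)⁻¹
  have hx : a ^ 2 * (b * a)⁻¹ * a⁻¹ = (a * b * a⁻¹)⁻¹ := by group
  rw [hx, hinv, hinv] at key
  have := congrArg (·⁻¹) key
  simp only [mul_inv_rev, inv_inv] at this
  rw [this]; group
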